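/- Let M be a Beth-Kripke model, s a world, and i an agent. Then the set Γ = {φ : φ is a propositional formula and (M,s) ⊨ K_i φ} is deductively closed under intuitionistic propositional logic: for every propositional ψ, ψ ∈ Γ if and only if Γ ⊢_i ψ. -/
import Mathlib


/-- A path through `α`: a maximal chain containing `α`. -/
def IsPath {Q : Type} [PartialOrder Q] (α : Q) (P : Set Q) : Prop :=
  α ∈ P ∧ IsChain (· ≤ ·) P ∧ ∀ P' : Set Q, IsChain (· ≤ ·) P' → P ⊆ P' → P' = P

/-- A bar for `α`: a set meeting every path through `α`. -/
def IsBar {Q : Type} [PartialOrder Q] (α : Q) (B : Set Q) : Prop :=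
  ∀ P : Set Q, IsPath α P → (B ∩ P).Nonempty

/-- Epistemic formulas over agents `Ag` and atoms `At`. -/
inductive EForm (Ag At : Type) : Type
  | atom : At → EForm Ag At
  | and  : EForm Ag At → EForm Ag At → EForm Ag At
  | or   : EForm Ag At → EForm Ag At → EForm Ag At
  | imp  : EForm Ag At → EForm Ag At → EForm Ag At
  | neg  : EForm Ag At → EForm Ag At
  | know : Ag → EForm Ag At → EForm Ag At

/-- A Beth-Kripke model: a set of pointed (rooted) Beth worlds with accessibility
relations between worlds. -/
structure BK (Ag At : Type) where
  S : Type
  Node : S → Type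
  [ord : ∀ s, PartialOrder (Node s)]
  root : ∀ s, Node s
  root_le : ∀ (s : S) (β : Node s), root s ≤ β
  F : ∀ s, Node s → Set At
  F_mono : ∀ {s : S} {a b : Node s}, a ≤ b → F s a ⊆ F s b
  acc : Ag → S → S → Prop

attribute [instance] BK.ord

/-- Epistemic Beth forcing `α ⊩_M φ` at node `α` of world `s`. -/
def BK.force {Ag At : Type} (M : BK Ag At) : EForm Ag At → ∀ s : M.S, M.Node s → Prop
  | .atom p, s, α => ∃ B, IsBar α B ∧ ∀ β ∈ B, p ∈ M.F s β
  | .and A B, s, α => M.force A s α ∧ M.force B s α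
  | .or A B, s, α => ∃ Bb, IsBar α Bb ∧ ∀ β ∈ Bb, M.force A s β ∨ M.force B s β
  | .imp A B, s, α => ∀ β, α ≤ β → M.force A s β → M.force B s β
  | .neg A, s, α => ∀ β, α ≤ β → ¬ M.force A s β
  | .know i A, s, _ => ∀ t, M.acc i s t → ∀ β : M.Node t, M.force A t β

/-- Propositional (epistemic-operator-free) formulas over atoms `At`. -/
inductive PForm (At : Type) : Type
  | atom : At → PForm At
  | and  : PForm At → PForm At → PForm At
  | or   : PForm At → PForm At → PForm At
  | imp  : PForm At → PForm At → PForm At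
  | neg  : PForm At → PForm At

/-- Embedding of propositional formulas into the epistemic language. -/
def PForm.embed {Ag At : Type} : PForm At → EForm Ag At
  | .atom p => .atom p
  | .and A B => .and A.embed B.embed
  | .or A B => .or A.embed B.embed
  | .imp A B => .imp A.embed B.embed
  | .neg A => .neg A.embed

/-- Natural-deduction derivability in intuitionistic propositional logic,
`Γ ⊢_i φ`. -/
inductive IDeriv {At : Type} : Set (PForm At) → PForm At → Prop
  | hyp {Γ φ} : φ ∈ Γ → IDeriv Γ φ
  | andI {Γ φ ψ} : IDeriv Γ φ → IDeriv Γ ψ → IDeriv Γ (.and φ ψ)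
  | andE₁ {Γ φ ψ} : IDeriv Γ (.and φ ψ) → IDeriv Γ φ
  | andE₂ {Γ φ ψ} : IDeriv Γ (.and φ ψ) → IDeriv Γ ψ
  | orI₁ {Γ φ ψ} : IDeriv Γ φ → IDeriv Γ (.or φ ψ)
  | orI₂ {Γ φ ψ} : IDeriv Γ ψ → IDeriv Γ (.or φ ψ)
  | orE {Γ φ ψ χ} : IDeriv Γ (.or φ ψ) → IDeriv (insert φ Γ) χ →
      IDeriv (insert ψ Γ) χ → IDeriv Γ χ
  | impI {Γ φ ψ} : IDeriv (insert φ Γ) ψ → IDeriv Γ (.imp φ ψ)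
  | impE {Γ φ ψ} : IDeriv Γ (.imp φ ψ) → IDeriv Γ φ → IDeriv Γ ψ
  | negI {Γ φ ψ} : IDeriv (insert φ Γ) ψ → IDeriv (insert φ Γ) (.neg ψ) →
      IDeriv Γ (.neg φ)
  | negE {Γ φ ψ} : IDeriv Γ φ → IDeriv Γ (.neg φ) → IDeriv Γ ψ

section Aux

lemma exists_path {Q : Type} [PartialOrder Q] (a : Q) : ∃ P, IsPath a P := by
  obtain ⟨T, hT, hsub⟩ := (Set.subsingleton_singleton (a := a)).isChain.exists_maxChain
  exact ⟨T, hsub rfl, hT.1, fun P' h1 h2 => (hT.2 h1 h2).symm⟩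

lemma singleton_isBar {Q : Type} [PartialOrder Q] (a : Q) : IsBar a {a} :=
  fun _ hP => ⟨a, rfl, hP.1⟩

/-- Bar lifting: a bar for `a` carrying a monotone property lifts to a bar for `b ≥ a`
consisting of points above `b` with the property. -/
lemma barA {Q : Type} [PartialOrder Q] {a b : Q} (hab : a ≤ b) {B : Set Q}
    (hB : IsBar a B) (Pr : Q → Prop) (hmono : ∀ {x y : Q}, x ≤ y → Pr x → Pr y)
    (hPr : ∀ x ∈ B, Pr x) : IsBar b {γ | b ≤ γ ∧ Pr γ} := by
  intro P hP
  obtain ⟨hbP, hPchain, hPmax⟩ := hP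
  have hCchain : IsChain (· ≤ ·) (insert a {γ ∈ P | b ≤ γ}) := by
    apply IsChain.insert (fun x hx y hy hxy => hPchain hx.1 hy.1 hxy)
    intro c hc _
    exact Or.inl (hab.trans hc.2)
  obtain ⟨T, hTmax, hCT⟩ := hCchain.exists_maxChain
  have hQpath : IsPath a T := ⟨hCT (Set.mem_insert a _), hTmax.1, fun P' h1 h2 => (hTmax.2 h1 h2).symm⟩
  obtain ⟨δ, hδB, hδT⟩ := hB T hQpath
  have hbT : b ∈ T := hCT (Set.mem_insert_of_mem _ ⟨hbP, le_refl b⟩)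
  rcases eq_or_ne δ b with heq | hne
  · exact ⟨b, ⟨le_refl b, hPr _ (heq ▸ hδB)⟩, hbP⟩
  rcases hTmax.1 hδT hbT hne with h | h
  · exact ⟨b, ⟨le_refl b, hmono h (hPr _ hδB)⟩, hbP⟩
  · -- b ≤ δ; show δ ∈ P by maximality of P
    have hchain : IsChain (· ≤ ·) (insert δ P) := by
      apply IsChain.insert hPchain
      intro γ hγ hneγ
      rcases eq_or_ne γ b with rfl | hγb
      · exact Or.inr h
      rcases hPchain hγ hbP hγb with hh | hh
      · exact Or.inr (hh.trans h)
      · exact hTmax.1 hδT (hCT (Set.mem_insert_of_mem _ ⟨hγ, hh⟩)) hneγ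
    have hδP : δ ∈ P := by
      have := hPmax _ hchain (Set.subset_insert _ _)
      rw [← this]; exact Set.mem_insert _ _
    exact ⟨δ, ⟨h, hPr _ hδB⟩, hδP⟩

/-- Monotonicity of Beth forcing. -/
lemma force_mono {Ag At : Type} (M : BK Ag At) (A : EForm Ag At) (s : M.S) :
    ∀ {a b : M.Node s}, a ≤ b → M.force A s a → M.force A s b := by
  induction A with
  | atom p =>
    rintro a b hab ⟨B, hB, hF⟩
    exact ⟨_, barA hab hB (fun γ => p ∈ M.F s γ) (fun h hp => M.F_mono h hp) hF,
      fun γ hγ => hγ.2⟩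
  | and A B ihA ihB =>
    rintro a b hab ⟨hA, hB⟩
    exact ⟨ihA hab hA, ihB hab hB⟩
  | or A B ihA ihB =>
    rintro a b hab ⟨Bb, hBb, hF⟩
    refine ⟨_, barA hab hBb (fun γ => M.force A s γ ∨ M.force B s γ)
      (fun h hp => hp.imp (ihA h) (ihB h)) hF, fun γ hγ => hγ.2⟩
  | imp A B ihA ihB =>
    intro a b hab h γ hγ hA
    exact h γ (hab.trans hγ) hA
  | neg A ihA =>
    intro a b hab h γ hγ hA
    exact h γ (hab.trans hγ) hA
  | know i A ihA =>
    intro a b _ h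
    exact h

/-- Covering: if a formula is forced on a bar for `β`, it is forced at `β`. -/
lemma force_bar {Ag At : Type} (M : BK Ag At) (A : EForm Ag At) (s : M.S) :
    ∀ (β : M.Node s) (B : Set (M.Node s)), IsBar β B →
      (∀ γ ∈ B, M.force A s γ) → M.force A s β := by
  induction A with
  | atom p =>
    intro β B hB hF
    refine ⟨{γ | p ∈ M.F s γ}, ?_, fun _ h => h⟩
    intro P hP
    obtain ⟨γ, hγB, hγP⟩ := hB P hP
    obtain ⟨Bγ, hBγ, hFγ⟩ := hF γ hγB
    obtain ⟨δ, hδBγ, hδP⟩ := hBγ P ⟨hγP, hP.2.1, hP.2.2⟩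
    exact ⟨δ, hFγ δ hδBγ, hδP⟩
  | and A B ihA ihB =>
    intro β Bb hB hF
    exact ⟨ihA β Bb hB (fun γ hγ => (hF γ hγ).1), ihB β Bb hB (fun γ hγ => (hF γ hγ).2)⟩
  | or A B ihA ihB =>
    intro β Bb hB hF
    refine ⟨{γ | M.force A s γ ∨ M.force B s γ}, ?_, fun _ h => h⟩
    intro P hP
    obtain ⟨γ, hγB, hγP⟩ := hB P hP
    obtain ⟨Bγ, hBγ, hFγ⟩ := hF γ hγB
    obtain ⟨δ, hδBγ, hδP⟩ := hBγ P ⟨hγP, hP.2.1, hP.2.2⟩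
    exact ⟨δ, hFγ δ hδBγ, hδP⟩
  | imp A B ihA ihB =>
    intro β Bb hB hF δ hβδ hA
    have hbar : IsBar δ {γ | δ ≤ γ ∧ M.force (.imp A B) s γ} :=
      barA hβδ hB (fun γ => M.force (.imp A B) s γ)
        (fun h hp => force_mono M _ s h hp) hF
    refine ihB δ _ hbar ?_
    rintro γ ⟨hδγ, himp⟩
    exact himp γ (le_refl γ) (force_mono M A s hδγ hA)
  | neg A ihA =>
    intro β Bb hB hF δ hβδ hA
    have hbar : IsBar δ {γ | δ ≤ γ ∧ M.force (.neg A) s γ} :=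
      barA hβδ hB (fun γ => M.force (.neg A) s γ)
        (fun h hp => force_mono M _ s h hp) hF
    obtain ⟨P, hP⟩ := exists_path δ
    obtain ⟨γ, ⟨hδγ, hneg⟩, _⟩ := hbar P hP
    exact hneg γ (le_refl γ) (force_mono M A s hδγ hA)
  | know i A ihA =>
    intro β Bb hB hF
    obtain ⟨P, hP⟩ := exists_path β
    obtain ⟨γ, hγB, _⟩ := hB P hP
    exact hF γ hγB

/-- Soundness of intuitionistic derivability for Beth forcing of embedded formulas. -/
lemma ideriv_sound {Ag At : Type} (M : BK Ag At) {Γ : Set (PForm At)} {ψ : PForm At}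
    (h : IDeriv Γ ψ) : ∀ (s : M.S) (β : M.Node s),
      (∀ φ ∈ Γ, M.force (PForm.embed (Ag := Ag) φ) s β) → M.force ψ.embed s β := by
  induction h with
  | hyp hmem => exact fun s β hΓ => hΓ _ hmem
  | andI _ _ ih1 ih2 => exact fun s β hΓ => ⟨ih1 s β hΓ, ih2 s β hΓ⟩
  | andE₁ _ ih => exact fun s β hΓ => (ih s β hΓ).1
  | andE₂ _ ih => exact fun s β hΓ => (ih s β hΓ).2
  | orI₁ _ ih =>
    exact fun s β hΓ => ⟨{β}, singleton_isBar β, fun γ hγ => hγ ▸ Or.inl (ih s β hΓ)⟩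
  | orI₂ _ ih =>
    exact fun s β hΓ => ⟨{β}, singleton_isBar β, fun γ hγ => hγ ▸ Or.inr (ih s β hΓ)⟩
  | @orE Γ' φ' ψ' χ' _ _ _ ih1 ih2 ih3 =>
    intro s β hΓ
    obtain ⟨Bb, hBb, hF⟩ := ih1 s β hΓ
    have hbar : IsBar β {γ | β ≤ γ ∧ (M.force φ'.embed s γ ∨ M.force ψ'.embed s γ)} :=
      barA (le_refl β) hBb _
        (fun h hp => hp.imp (force_mono M _ s h) (force_mono M _ s h)) hF
    refine force_bar M _ s β _ hbar ?_
    rintro γ ⟨hβγ, hor⟩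
    have hΓγ : ∀ φ ∈ Γ', M.force (PForm.embed (Ag := Ag) φ) s γ :=
      fun φ hφ => force_mono M _ s hβγ (hΓ φ hφ)
    rcases hor with hφ | hψ
    · exact ih2 s γ (fun χ hχ => (Set.mem_insert_iff.mp hχ).elim (fun e => e ▸ hφ) (hΓγ χ))
    · exact ih3 s γ (fun χ hχ => (Set.mem_insert_iff.mp hχ).elim (fun e => e ▸ hψ) (hΓγ χ))
  | impI _ ih =>
    intro s β hΓ γ hβγ hA
    exact ih s γ (fun χ hχ => (Set.mem_insert_iff.mp hχ).elim (fun e => e ▸ hA)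
      (fun hm => force_mono M _ s hβγ (hΓ χ hm)))
  | impE _ _ ih1 ih2 =>
    exact fun s β hΓ => ih1 s β hΓ β (le_refl β) (ih2 s β hΓ)
  | negI _ _ ih1 ih2 =>
    intro s β hΓ γ hβγ hA
    have hΓγ : ∀ χ, χ ∈ insert _ _ → M.force (PForm.embed (Ag := Ag) χ) s γ :=
      fun χ hχ => (Set.mem_insert_iff.mp hχ).elim (fun e => e ▸ hA)
        (fun hm => force_mono M _ s hβγ (hΓ χ hm))
    exact ih2 s γ hΓγ γ (le_refl γ) (ih1 s γ hΓγ)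
  | negE _ _ ih1 ih2 =>
    exact fun s β hΓ => absurd (ih1 s β hΓ) (ih2 s β hΓ β (le_refl β))

end Aux

/-- the set of propositional formulas known by agent `i` at `(M,s)`
is a deductively closed intuitionistic theory. -/
theorem known_set_deductively_closed {Ag At : Type} (M : BK Ag At) (s : M.S)
    (i : Ag) (hrefl : ∀ t : M.S, M.acc i t t) :
    ∀ ψ : PForm At,
      ψ ∈ {φ : PForm At | M.force (.know i φ.embed) s (M.root s)} ↔
        IDeriv {φ : PForm At | M.force (.know i φ.embed) s (M.root s)} ψ := by
  intro ψ
  constructor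
  · exact fun h => IDeriv.hyp h
  · intro h t hacc β
    exact ideriv_sound M h t β (fun φ hφ => hφ t hacc β)
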